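/- Let P, Q be nonempty subsets of Y with P + K closed. Then the following are equivalent: (i) Q ⊆ P + K; (ii) there exists e ∈ K \ {0} such that sup_{q∈Q} inf_{p∈P} z^{e,K}(p − q) ≤ 0; (iii) for all e ∈ K \ {0}, sup_{q∈Q} inf_{p∈P} z^{e,K}(p − q) ≤ 0. -/

import Mathlib

open Set Pointwise Filter Topology

/-- Gerstewitz scalarization function. -/
noncomputable def zG {Y : Type*} [AddCommGroup Y] [Module ℝ Y] (e : Y) (K : Set Y) (y : Y) :
    EReal :=
  sInf ((fun t : ℝ => (t : EReal)) '' {t : ℝ | t • e - y ∈ K})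

/-- ℤ₁^{e,K}(P,Q) = sup_{q∈Q} inf_{p∈P} z^{e,K}(p − q). -/
noncomputable def Zone {Y : Type*} [AddCommGroup Y] [Module ℝ Y] (e : Y) (K : Set Y)
    (P Q : Set Y) : EReal :=
  ⨆ q ∈ Q, ⨅ p ∈ P, zG e K (p - q)

/-- characterization of the l-type set order relation via ℤ₁, without
    any attainment assumption, assuming P + K closed. -/
lemma key {Y : Type*} [AddCommGroup Y] [Module ℝ Y] [TopologicalSpace Y]
    [IsTopologicalAddGroup Y] [ContinuousSMul ℝ Y]
    (K : Set Y) (hKconv : Convex ℝ K)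
    (hKcone : ∀ (c : ℝ), 0 ≤ c → ∀ x ∈ K, c • x ∈ K)
    (e : Y) (he : e ∈ K)
    (P : Set Y) (hPKcl : IsClosed (P + K)) (q : Y) :
    q ∈ P + K ↔ (⨅ p ∈ P, zG e K (p - q)) ≤ 0 := by
  have hKadd : ∀ a ∈ K, ∀ b ∈ K, a + b ∈ K := by
    intro a ha b hb
    have h2 := hKcone 2 (by norm_num) _ (hKconv ha hb (by norm_num) (by norm_num) (by norm_num : (1:ℝ)/2 + 1/2 = 1))
    simpa [smul_smul] using h2
  constructor
  · rintro ⟨p, hp, k, hk, rfl⟩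
    have hz : zG e K (p - (p + k)) ≤ 0 := by
      apply sInf_le
      refine ⟨0, ?_, rfl⟩
      simp only [mem_setOf_eq, zero_smul, zero_sub, neg_sub]
      simpa using hk
    calc (⨅ p' ∈ P, zG e K (p' - (p + k))) ≤ zG e K (p - (p + k)) := biInf_le _ hp
      _ ≤ 0 := hz
  · intro h
    have hmem : ∀ t : ℝ, 0 < t → q + t • e ∈ P + K := by
      intro t ht
      have hlt : (⨅ p ∈ P, zG e K (p - q)) < (t : EReal) := by
        refine lt_of_le_of_lt h ?_
        exact_mod_cast ht
      obtain ⟨p, hplt⟩ := iInf_lt_iff.mp hlt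
      obtain ⟨hp, hplt⟩ := iInf_lt_iff.mp hplt
      obtain ⟨x, ⟨s, hs, rfl⟩, hxlt⟩ := sInf_lt_iff.mp hplt
      have hst : s < t := by simpa using EReal.coe_lt_coe_iff.mp hxlt
      have hkey : t • e - (p - q) ∈ K := by
        have : t • e - (p - q) = (s • e - (p - q)) + (t - s) • e := by
          rw [sub_smul]; abel
        rw [this]
        exact hKadd _ hs _ (hKcone _ (by linarith) _ he)
      exact ⟨p, hp, t • e - (p - q), hkey, by abel⟩
    have htend : Tendsto (fun t : ℝ => q + t • e) (𝓝[>] 0) (𝓝 q) := by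
      have : Tendsto (fun t : ℝ => q + t • e) (𝓝 0) (𝓝 (q + (0:ℝ) • e)) := by
        exact (tendsto_const_nhds.add ((continuous_id.smul continuous_const).tendsto 0))
      simpa using this.mono_left nhdsWithin_le_nhds
    have : q ∈ closure (P + K) := by
      refine mem_closure_of_tendsto htend ?_
      filter_upwards [self_mem_nhdsWithin] with t ht
      exact hmem t ht
    rwa [hPKcl.closure_eq] at this

theorem stmt_8 {Y : Type*} [AddCommGroup Y] [Module ℝ Y] [TopologicalSpace Y]
    [IsTopologicalAddGroup Y] [ContinuousSMul ℝ Y]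
    (K : Set Y) (hKne : K.Nonempty) (hKcl : IsClosed K) (hKconv : Convex ℝ K)
    (hKcone : ∀ (c : ℝ), 0 ≤ c → ∀ x ∈ K, c • x ∈ K) (hKproper : K ≠ univ)
    (hKnontriv : ∃ e, e ∈ K \ {0})
    (P Q : Set Y) (hPne : P.Nonempty) (hQne : Q.Nonempty) (hPKcl : IsClosed (P + K)) :
    (Q ⊆ P + K ↔ ∃ e ∈ K \ {0}, Zone e K P Q ≤ 0) ∧
    (Q ⊆ P + K ↔ ∀ e ∈ K \ {0}, Zone e K P Q ≤ 0) := by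
  have main : ∀ e ∈ K \ {0}, (Q ⊆ P + K ↔ Zone e K P Q ≤ 0) := by
    intro e he
    unfold Zone
    rw [iSup₂_le_iff]
    constructor
    · intro hQ q hq
      exact (key K hKconv hKcone e he.1 P hPKcl q).mp (hQ hq)
    · intro h q hq
      exact (key K hKconv hKcone e he.1 P hPKcl q).mpr (h q hq)
  obtain ⟨e₀, he₀⟩ := hKnontriv
  constructor
  · constructor
    · intro hQ; exact ⟨e₀, he₀, (main e₀ he₀).mp hQ⟩
    · rintro ⟨e, he, hz⟩; exact (main e he).mpr hz
  · constructor
    · intro hQ e he; exact (main e he).mp hQ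
    · intro h; exact (main e₀ he₀).mpr (h e₀ he₀)
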